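/- Let T be a special rim hook tabloid of shape ρ = (2n+k−1, 2n+k−3, ..., k+3, k−3, 2, 2) with content λ such that the product of chains (n+k) × n admits a chain partition of type λ. Then λ_i = ρ_i = 2n+k−2i+1 for all 1 ≤ i ≤ n−1. -/

import Mathlib

/-- Result of removing from the weakly decreasing list `l` (rows of a
Ferrers diagram, largest first) the special rim hook whose lowest row is the
last row and whose topmost row is row `r` (0-indexed). -/
def srhtStep (l : List ℕ) (r : ℕ) : List ℕ :=
  (l.take r ++ (l.drop (r + 1)).map (· - 1)).filter (fun x => x != 0)

/-- All special rim hook tabloids of the shape given by the weakly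
decreasing list of row lengths, each tabloid recorded as the list of
`(size, height)` pairs of its special rim hooks, in order of removal
(always removing the hook containing the first-column cell of the
shortest remaining row). -/
def srhtsAux : ℕ → List ℕ → List (List (ℕ × ℕ))
  | 0, _ => [[]]
  | fuel + 1, l =>
      if l.length = 0 then [[]]
      else
        (List.range l.length).flatMap fun r =>
          (srhtsAux fuel (srhtStep l r)).map fun T =>
            (l.getD r 0 + (l.length - 1 - r), l.length - 1 - r) :: T

def srhts (l : List ℕ) : List (List (ℕ × ℕ)) := srhtsAux l.length l

/-- The content of a special rim hook tabloid: its hook sizes sorted decreasingly. -/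
def contList (T : List (ℕ × ℕ)) : List ℕ :=
  (((T.map Prod.fst : List ℕ) : Multiset ℕ).sort (· ≤ ·)).reverse

/-- The height of a special rim hook tabloid: the sum of the heights of its hooks. -/
def htT (T : List (ℕ × ℕ)) : ℕ := (T.map Prod.snd).sum

def IsPartitionM {V : Type*} [DecidableEq V] (B : Multiset (Finset V)) : Prop :=
  ∀ x : V, (B.map fun s => if x ∈ s then (1 : ℕ) else 0).sum = 1

/-- `P` has a chain partition whose multiset of block sizes is `μ`. -/
def HasChainPartitionOfType (V : Type*) [DecidableEq V] [PartialOrder V]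
    (μ : Multiset ℕ) : Prop :=
  ∃ B : Multiset (Finset V), IsPartitionM B ∧
    (∀ s ∈ B, ∀ x ∈ s, ∀ y ∈ s, x ≤ y ∨ y ≤ x) ∧ B.map Finset.card = μ

/-- Sum of the `j` largest entries of the multiset `μ`. -/
def topSum (μ : Multiset ℕ) (j : ℕ) : ℕ :=
  ((μ.powersetCard j).map Multiset.sum).sup

/-- The staircase `(2n+k-1, 2n+k-3, ..., k+3)` of `n-1` parts. -/
def stairList (n k : ℕ) : List ℕ := (List.range (n - 1)).map fun i => 2 * n + k - 2 * i - 1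

/-- The partition `ρ = (2n+k-1, 2n+k-3, ..., k+3, k-3, 2, 2)`. -/
def rhoList (n k : ℕ) : List ℕ := stairList n k ++ [k - 3, 2, 2]

section Helpers

lemma le_of_le_cons_of_not_mem {α : Type*} [DecidableEq α] {s t : Multiset α} {a : α}
    (hs : s ≤ a ::ₘ t) (ha : a ∉ s) : s ≤ t := by
  rw [Multiset.le_iff_count] at hs ⊢
  intro x
  have h := hs x
  rw [Multiset.count_cons] at h
  rcases eq_or_ne x a with rfl | hne
  · simp [Multiset.count_eq_zero_of_notMem ha]
  · simpa [hne] using h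

lemma sum_le_length_add (E : List ℕ) : E.sum ≤ E.length + (E.map (· - 1)).sum := by
  induction E with
  | nil => simp
  | cons a t ih => simp only [List.sum_cons, List.map_cons, List.length_cons]; omega

lemma exists_le_map {α β : Type*} [DecidableEq β] (f : α → β) (t : Multiset α) :
    ∀ s : Multiset β, s ≤ t.map f → ∃ u : Multiset α, u ≤ t ∧ u.map f = s := by
  induction t using Multiset.induction with
  | empty => intro s hs; simp at hs; exact ⟨0, le_refl _, by simp [hs]⟩
  | cons b t ih =>
    intro s hs
    rw [Multiset.map_cons] at hs
    by_cases hb : f b ∈ s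
    · obtain ⟨u, hu, hmap⟩ := ih (s.erase (f b)) (by
        have := Multiset.erase_le_erase (f b) hs
        rwa [Multiset.erase_cons_head] at this)
      refine ⟨b ::ₘ u, Multiset.cons_le_cons _ hu, ?_⟩
      rw [Multiset.map_cons, hmap, Multiset.cons_erase hb]
    · exact ih s (le_of_le_cons_of_not_mem hs hb) |>.imp
        fun u ⟨hu, hm⟩ => ⟨le_trans hu (Multiset.le_cons_self _ _), hm⟩

lemma take_sum_le_sorted {a : ℕ} {t : List ℕ} (h : (a :: t).Pairwise (· ≥ ·)) (j : ℕ) :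
    (t.take (j + 1)).sum ≤ a + (t.take j).sum := by
  by_cases hl : t.length ≤ j
  · rw [List.take_of_length_le hl, List.take_of_length_le (le_trans hl (Nat.le_succ j))]; omega
  · push_neg at hl
    rw [List.take_succ]
    rw [List.getElem?_eq_getElem hl]
    simp only [Option.toList_some, List.sum_append, List.sum_cons, List.sum_nil]
    have : t[j] ≤ a := List.rel_of_pairwise_cons h (List.getElem_mem hl)
    omega

lemma msum_le_take_sum : ∀ (L : List ℕ), L.Pairwise (· ≥ ·) → ∀ (j : ℕ) (s : Multiset ℕ),
    s ≤ (L : Multiset ℕ) → Multiset.card s ≤ j → s.sum ≤ (L.take j).sum := by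
  intro L
  induction L with
  | nil => intro _ j s hs _; simp [Multiset.le_zero.mp hs]
  | cons a t ih =>
    intro hsort j s hs hcard
    match j with
    | 0 =>
      have : s = 0 := Multiset.card_eq_zero.mp (Nat.le_zero.mp hcard)
      simp [this]
    | j + 1 =>
      have hcons : ((a :: t : List ℕ) : Multiset ℕ) = a ::ₘ (t : Multiset ℕ) := rfl
      rw [hcons] at hs
      by_cases ha : a ∈ s
      · have h1 : s.erase a ≤ (t : Multiset ℕ) := by
          have := Multiset.erase_le_erase a hs
          rwa [Multiset.erase_cons_head] at this
        have h2 : Multiset.card (s.erase a) ≤ j := by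
          rw [Multiset.card_erase_of_mem ha]
          exact Nat.pred_le_pred hcard
        have := ih hsort.of_cons j _ h1 h2
        have hsum : a + (s.erase a).sum = s.sum := Multiset.sum_erase ha
        simp only [List.take_succ_cons, List.sum_cons]
        omega
      · have := ih hsort.of_cons (j+1) s (le_of_le_cons_of_not_mem hs ha) hcard
        have := take_sum_le_sorted hsort j
        simp only [List.take_succ_cons, List.sum_cons]
        omega



lemma filter_ne_zero_take_sum : ∀ (L : List ℕ), L.Pairwise (· ≥ ·) → ∀ (q : ℕ),
    ((L.filter (fun x => x != 0)).take q).sum = (L.take q).sum := by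
  intro L
  induction L with
  | nil => simp
  | cons a t ih =>
    intro h q
    by_cases ha : a = 0
    · subst ha
      have ht : ∀ x ∈ t, x = 0 := fun x hx => Nat.le_zero.mp (List.rel_of_pairwise_cons h hx)
      have h1 : (0 :: t).filter (fun x => x != 0) = [] := by
        rw [List.filter_eq_nil_iff]
        intro x hx
        simp only [List.mem_cons] at hx
        rcases hx with rfl | hx
        · simp
        · simp [ht _ hx]
      rw [h1]
      simp only [List.take_nil, List.sum_nil]
      refine (List.sum_eq_zero fun x hx => ?_).symm
      have := List.mem_of_mem_take hx
      simp only [List.mem_cons] at this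
      rcases this with rfl | hx'
      · rfl
      · exact ht _ hx'
    · have h1 : (a :: t).filter (fun x => x != 0) = a :: t.filter (fun x => x != 0) := by
        simp [List.filter_cons, ha]
      rw [h1]
      match q with
      | 0 => simp
      | q + 1 =>
        simp only [List.take_succ_cons, List.sum_cons]
        rw [ih h.of_cons q]

lemma base_sorted {l : List ℕ} (h : l.Pairwise (· ≥ ·)) (r : ℕ) :
    (l.take r ++ (l.drop (r + 1)).map (· - 1)).Pairwise (· ≥ ·) := by
  rw [List.pairwise_append]
  have hsplit : List.Pairwise (· ≥ ·) (l.take r ++ l.drop r) := by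
    rw [List.take_append_drop]; exact h
  rw [List.pairwise_append] at hsplit
  obtain ⟨h1, h2, h3⟩ := hsplit
  have hdd : l.drop (r+1) = List.drop 1 (l.drop r) := by rw [List.drop_drop, Nat.add_comm]
  refine ⟨h1, ?_, ?_⟩
  · refine List.Pairwise.map _ (fun a b hab => Nat.sub_le_sub_right hab 1) ?_
    rw [hdd]
    exact h2.sublist (List.drop_sublist 1 _)
  · intro a ha b hb
    simp only [List.mem_map] at hb
    obtain ⟨x, hx, rfl⟩ := hb
    have hxd : x ∈ l.drop r := by
      rw [hdd] at hx
      exact (List.drop_sublist 1 _).mem hx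
    exact le_trans (Nat.sub_le x 1) (h3 a ha x hxd)

lemma srhtStep_sorted {l : List ℕ} (h : l.Pairwise (· ≥ ·)) (r : ℕ) :
    (srhtStep l r).Pairwise (· ≥ ·) :=
  (base_sorted h r).sublist List.filter_sublist

lemma srhtStep_length {l : List ℕ} {r : ℕ} (hr : r < l.length) :
    (srhtStep l r).length ≤ l.length - 1 := by
  refine le_trans (List.length_filter_le _ _) ?_
  simp only [List.length_append, List.length_take, List.length_map, List.length_drop]
  omega

lemma take_le_step (l : List ℕ) (r q : ℕ) (hr : r < l.length) :
    (l.take (r+1+q)).sum ≤ (l.getD r 0 + (l.length - 1 - r)) +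
      ((l.take r ++ (l.drop (r+1)).map (· - 1)).take (r+q)).sum := by
  have hA : (l.take r).length = r := by simp; omega
  have hLHS : l.take (r+1+q) = l.take r ++ [l[r]] ++ (l.drop (r+1)).take q := by
    rw [List.take_add]
    congr 1
    rw [List.take_succ, List.getElem?_eq_getElem hr]
    rfl
  have hRHS : (l.take r ++ (l.drop (r+1)).map (· - 1)).take (r+q)
      = l.take r ++ ((l.drop (r+1)).take q).map (· - 1) := by
    rw [List.take_add, List.take_left' hA, List.drop_left' hA, List.map_take]
  rw [hLHS, hRHS]
  simp only [List.sum_append, List.sum_cons, List.sum_nil, List.getD_eq_getElem l 0 hr]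
  have hE := sum_le_length_add ((l.drop (r+1)).take q)
  have hEl : ((l.drop (r+1)).take q).length ≤ l.length - 1 - r := by
    simp only [List.length_take, List.length_drop]; omega
  omega
lemma srht_lower : ∀ (fuel : ℕ) (l : List ℕ), l.Pairwise (· ≥ ·) → l.length ≤ fuel →
    ∀ T ∈ srhtsAux fuel l, ∀ j, ∃ s : Multiset ℕ,
      s ≤ (T.map Prod.fst : Multiset ℕ) ∧ Multiset.card s ≤ j ∧ (l.take j).sum ≤ s.sum := by
  intro fuel
  induction fuel with
  | zero =>
    intro l _ hlen T hT j
    have : l = [] := List.length_eq_zero_iff.mp (Nat.le_zero.mp hlen)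
    subst this
    exact ⟨0, Multiset.zero_le _, by simp, by simp⟩
  | succ fuel ih =>
    intro l hsort hlen T hT j
    rw [srhtsAux] at hT
    by_cases hl0 : l.length = 0
    · rw [if_pos hl0] at hT
      have : l = [] := List.length_eq_zero_iff.mp hl0
      subst this
      exact ⟨0, Multiset.zero_le _, by simp, by simp⟩
    · rw [if_neg hl0] at hT
      rw [List.mem_flatMap] at hT
      obtain ⟨r, hr, hT⟩ := hT
      rw [List.mem_range] at hr
      rw [List.mem_map] at hT
      obtain ⟨T', hT', rfl⟩ := hT
      have hsort' := srhtStep_sorted hsort r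
      have hlen' : (srhtStep l r).length ≤ fuel := le_trans (srhtStep_length hr) (by omega)
      have hmap : (((((l.getD r 0 + (l.length - 1 - r), l.length - 1 - r)) :: T').map Prod.fst
          : List ℕ) : Multiset ℕ)
          = (l.getD r 0 + (l.length - 1 - r)) ::ₘ (T'.map Prod.fst : Multiset ℕ) := rfl
      by_cases hjr : j ≤ r
      · obtain ⟨s, hs1, hs2, hs3⟩ := ih (srhtStep l r) hsort' hlen' T' hT' j
        refine ⟨s, ?_, hs2, ?_⟩
        · rw [hmap]; exact le_trans hs1 (Multiset.le_cons_self _ _)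
        · refine le_trans ?_ hs3
          have h1 : ((srhtStep l r).take j).sum
              = ((l.take r ++ (l.drop (r+1)).map (· - 1)).take j).sum :=
            filter_ne_zero_take_sum _ (base_sorted hsort r) j
          rw [h1, List.take_append_of_le_length (by simp; omega), List.take_take,
            min_eq_left hjr]
      · push_neg at hjr
        obtain ⟨s, hs1, hs2, hs3⟩ := ih (srhtStep l r) hsort' hlen' T' hT' (j - 1)
        refine ⟨(l.getD r 0 + (l.length - 1 - r)) ::ₘ s, ?_, ?_, ?_⟩
        · rw [hmap]; exact Multiset.cons_le_cons _ hs1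
        · rw [Multiset.card_cons]; omega
        · rw [Multiset.sum_cons]
          have h1 : ((srhtStep l r).take (j-1)).sum
              = ((l.take r ++ (l.drop (r+1)).map (· - 1)).take (j-1)).sum :=
            filter_ne_zero_take_sum _ (base_sorted hsort r) (j-1)
          have h2 := take_le_step l r (j - 1 - r) hr
          rw [show r + 1 + (j - 1 - r) = j from by omega, show r + (j - 1 - r) = j - 1 from by omega] at h2
          rw [h1] at hs3
          omega

lemma multiset_sum_finset_sum {α ι : Type*} (S : Multiset α) (F : Finset ι) (g : α → ι → ℕ) :
    (S.map (fun s => ∑ t ∈ F, g s t)).sum = ∑ t ∈ F, (S.map (fun s => g s t)).sum := by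
  induction S using Multiset.induction with
  | empty => simp
  | cons a S ih => simp [ih, Finset.sum_add_distrib]

lemma sum_min_bound (N : ℕ) : ∀ j : ℕ, 2*j ≤ N →
    ∑ t ∈ Finset.range (N-1), min j (min (t+1) (N-1-t)) ≤ j * (N-j) := by
  intro j
  induction j with
  | zero => simp
  | succ j ih =>
    intro hj
    have step : ∀ t ∈ Finset.range (N-1), min (j+1) (min (t+1) (N-1-t)) ≤
        min j (min (t+1) (N-1-t)) + (if j < min (t+1) (N-1-t) then 1 else 0) := by
      intro t _
      by_cases hc : j < min (t+1) (N-1-t) <;> simp [hc] <;> omega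
    refine le_trans (Finset.sum_le_sum step) ?_
    rw [Finset.sum_add_distrib, Finset.sum_boole]
    have hcard : (Finset.filter (fun t => j < min (t+1) (N-1-t)) (Finset.range (N-1))).card
        ≤ N - 1 - 2*j := by
      refine le_trans (Finset.card_le_card (fun t ht => ?_)) (le_of_eq (Nat.card_Icc j (N-2-j)) |>.trans (by omega))
      simp only [Finset.mem_filter, Finset.mem_range, lt_min_iff] at ht
      rw [Finset.mem_Icc]
      omega
    have hih := ih (by omega)
    obtain ⟨c, rfl⟩ : ∃ c, N = 2*j+2+c := ⟨N - (2*j+2), by omega⟩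
    have key : (j+1) * (2*j+2+c - (j+1)) = j * (2*j+2+c - j) + (2*j+2+c - 1 - 2*j) := by
      rw [show 2*j+2+c - (j+1) = j+1+c from by omega, show 2*j+2+c - j = j+2+c from by omega,
        show 2*j+2+c-1-2*j = c+1 from by omega]
      ring
    push_cast
    rw [key]
    omega

section Grid
variable {n k : ℕ}

lemma rank_card_le₁ (t : ℕ) :
    (Finset.univ.filter (fun p : Fin (n+k) × Fin n => p.1.1 + p.2.1 = t)).card ≤ t + 1 := by
  refine le_trans (Finset.card_le_card_of_injOn (t := Finset.range (t+1)) (fun p : Fin (n+k) × Fin n => p.1.1) (fun p hp => ?_) ?_) (le_of_eq (Finset.card_range _))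
  · simp only [Finset.coe_filter, Finset.mem_filter, Finset.mem_coe, Set.mem_setOf_eq] at hp
    simp only [Finset.mem_coe, Finset.mem_range]
    simpa using (show p.1.1 < t + 1 by omega)
  · intro p hp q hq hpq
    simp only [Finset.coe_filter, Set.mem_setOf_eq] at hp hq
    simp only at hpq
    have h1 : p.1 = q.1 := Fin.ext hpq
    have h2 : p.2 = q.2 := Fin.ext (by omega)
    exact Prod.ext h1 h2
  
lemma rank_card_le₂ (t : ℕ) :
    (Finset.univ.filter (fun p : Fin (n+k) × Fin n => p.1.1 + p.2.1 = t)).card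
      ≤ 2*n+k-1-t := by
  refine le_trans (Finset.card_le_card_of_injOn (t := Finset.range (2*n+k-1-t)) (fun p : Fin (n+k) × Fin n => (n+k-1) - p.1.1) (fun p hp => ?_) ?_) (le_of_eq (Finset.card_range _))
  · simp only [Finset.coe_filter, Finset.mem_filter, Finset.mem_coe, Set.mem_setOf_eq] at hp
    simp only [Finset.mem_coe, Finset.mem_range]
    have h1 := p.1.isLt
    have h2 := p.2.isLt
    simpa using (show n + k - 1 - p.1.1 < 2*n+k-1-t by omega)
  · intro p hp q hq hpq
    simp only [Finset.coe_filter, Set.mem_setOf_eq] at hp hq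
    simp only at hpq
    have hp1 := p.1.isLt
    have hq1 := q.1.isLt
    have h1 : p.1 = q.1 := Fin.ext (by omega)
    have h2 : p.2 = q.2 := Fin.ext (by omega)
    exact Prod.ext h1 h2

lemma chain_fiber_le_one (s : Finset (Fin (n+k) × Fin n))
    (hchain : ∀ x ∈ s, ∀ y ∈ s, x ≤ y ∨ y ≤ x) (t : ℕ) :
    (s.filter (fun p => p.1.1 + p.2.1 = t)).card ≤ 1 := by
  rw [Finset.card_le_one]
  intro a ha b hb
  simp only [Finset.mem_filter] at ha hb
  have hcomp := hchain a ha.1 b hb.1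
  have : a.1.1 = b.1.1 ∧ a.2.1 = b.2.1 := by
    rcases hcomp with hc | hc <;>
      [skip; (rcases hc with ⟨hc1, hc2⟩)] <;>
      · first
        | (rcases hc with ⟨hc1, hc2⟩
           have := Fin.le_def.mp hc1; have := Fin.le_def.mp hc2; omega)
        | (have := Fin.le_def.mp hc1; have := Fin.le_def.mp hc2; omega)
  exact Prod.ext (Fin.ext this.1) (Fin.ext this.2)

lemma sum_fiber_le_rank (B B' : Multiset (Finset (Fin (n+k) × Fin n)))
    (hpart : ∀ x, (B.map fun s => if x ∈ s then (1:ℕ) else 0).sum = 1)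
    (hB' : B' ≤ B) (t : ℕ) :
    (B'.map (fun s => (s.filter (fun p => p.1.1 + p.2.1 = t)).card)).sum
      ≤ (Finset.univ.filter (fun p : Fin (n+k) × Fin n => p.1.1 + p.2.1 = t)).card := by
  classical
  have hfib : ∀ s ∈ B', (s.filter (fun p => p.1.1 + p.2.1 = t)).card =
      ∑ x ∈ Finset.univ.filter (fun p : Fin (n+k) × Fin n => p.1.1 + p.2.1 = t),
        (if x ∈ s then (1:ℕ) else 0) := by
    intro s _
    rw [← Finset.card_filter]
    congr 1
    ext p
    simp only [Finset.mem_filter, Finset.mem_univ, true_and]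
    tauto
  rw [Multiset.map_congr rfl hfib, multiset_sum_finset_sum]
  calc ∑ x ∈ Finset.univ.filter (fun p : Fin (n+k) × Fin n => p.1.1 + p.2.1 = t),
        (B'.map (fun s => if x ∈ s then (1:ℕ) else 0)).sum
      ≤ ∑ _x ∈ Finset.univ.filter (fun p : Fin (n+k) × Fin n => p.1.1 + p.2.1 = t),
        1 := by
        refine Finset.sum_le_sum (fun x _ => ?_)
        obtain ⟨C, hC⟩ := Multiset.le_iff_exists_add.mp hB'
        have := hpart x
        rw [hC, Multiset.map_add, Multiset.sum_add] at this
        omega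
    _ = _ := by simp

lemma chain_bound (B B' : Multiset (Finset (Fin (n+k) × Fin n)))
    (hpart : ∀ x, (B.map fun s => if x ∈ s then (1:ℕ) else 0).sum = 1)
    (hchain : ∀ s ∈ B, ∀ x ∈ s, ∀ y ∈ s, x ≤ y ∨ y ≤ x)
    (hB' : B' ≤ B) (j : ℕ) (hcard : Multiset.card B' ≤ j) (hj : 2*j ≤ 2*n+k) :
    (B'.map Finset.card).sum ≤ j * (2*n+k-j) := by
  classical
  have step1 : ∀ s ∈ B', Finset.card s =
      ∑ t ∈ Finset.range (2*n+k-1), (s.filter (fun p => p.1.1 + p.2.1 = t)).card := by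
    intro s _
    refine Finset.card_eq_sum_card_fiberwise (fun p _ => ?_)
    have h1 := p.1.isLt
    have h2 := p.2.isLt
    rw [Finset.mem_coe, Finset.mem_range]
    omega
  rw [Multiset.map_congr rfl step1, multiset_sum_finset_sum]
  refine le_trans (Finset.sum_le_sum (g := fun t => min j (min (t+1) (2*n+k-1-t)))
    (fun t _ => ?_)) (sum_min_bound _ j hj)
  refine le_min ?_ (le_min ?_ ?_)
  · -- ≤ j : each fiber has at most one element
    refine le_trans (Multiset.sum_le_card_nsmul _ 1 ?_) ?_
    · intro x hx
      rw [Multiset.mem_map] at hx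
      obtain ⟨s, hs, rfl⟩ := hx
      exact chain_fiber_le_one s (hchain s (Multiset.mem_of_le hB' hs)) t
    · simp only [Multiset.card_map, smul_eq_mul, mul_one]
      exact hcard
  · exact le_trans (sum_fiber_le_rank B B' hpart hB' t) (rank_card_le₁ t)
  · exact le_trans (sum_fiber_le_rank B B' hpart hB' t) (rank_card_le₂ t)

end Grid


lemma stair_length (n k : ℕ) : (stairList n k).length = n - 1 := by simp [stairList]

lemma stair_sorted (n k : ℕ) : (stairList n k).Pairwise (· ≥ ·) := by
  refine List.Pairwise.map _ (fun a b hab => ?_) (List.pairwise_lt_range (n := n-1))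
  omega

lemma rho_sorted (n k : ℕ) (hk : 5 ≤ k) : (rhoList n k).Pairwise (· ≥ ·) := by
  rw [rhoList, List.pairwise_append]
  refine ⟨stair_sorted n k, ?_, ?_⟩
  · refine List.Pairwise.cons (fun b hb => ?_) (List.Pairwise.cons (fun b hb => ?_)
      (List.Pairwise.cons (fun b hb => ?_) List.Pairwise.nil))
    · rcases List.mem_cons.mp hb with rfl | hb
      · omega
      · rw [List.mem_singleton.mp hb]; omega
    · rw [List.mem_singleton.mp hb]
    · exact absurd hb List.not_mem_nil
  · intro a ha b hb
    simp only [stairList, List.mem_map, List.mem_range] at ha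
    obtain ⟨i, hi, rfl⟩ := ha
    simp only [List.mem_cons, List.mem_singleton, List.not_mem_nil] at hb
    rcases hb with rfl | rfl | hb
    · omega
    · omega
    · rcases hb with rfl | h; · omega
      · simp at h

lemma range_map_sum (N : ℕ) : ∀ j : ℕ, 2*j ≤ N →
    (((List.range j).map fun i => N - 2 * i - 1).sum) = j * (N - j) := by
  intro j
  induction j with
  | zero => simp
  | succ j ih =>
    intro hj
    rw [List.range_succ, List.map_append, List.sum_append, ih (by omega)]
    simp only [List.map_cons, List.map_nil, List.sum_cons, List.sum_nil]
    obtain ⟨c, rfl⟩ : ∃ c, N = 2*j+2+c := ⟨N - (2*j+2), by omega⟩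
    have key : (j+1) * (2*j+2+c - (j+1)) = j * (2*j+2+c - j) + (2*j+2+c - 2*j - 1) := by
      rw [show 2*j+2+c - (j+1) = j+1+c from by omega, show 2*j+2+c - j = j+2+c from by omega,
        show 2*j+2+c - 2*j - 1 = c+1 from by omega]
      ring
    omega

lemma stair_take_sum (n k j : ℕ) (hn : 1 ≤ n) (hj : j ≤ n - 1) :
    ((stairList n k).take j).sum = j * (2*n+k-j) := by
  rw [stairList, ← List.map_take, List.take_range, min_eq_left hj]
  exact range_map_sum (2*n+k) j (by omega)

lemma rho_take_sum (n k j : ℕ) (hn : 1 ≤ n) (hj : j ≤ n - 1) :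
    ((rhoList n k).take j).sum = j * (2*n+k-j) := by
  rw [rhoList, List.take_append_of_le_length (by rw [stair_length]; exact hj)]
  exact stair_take_sum n k j hn hj

lemma rho_take_n_sum (n k : ℕ) (hn : 1 ≤ n) :
    ((rhoList n k).take n).sum = (n-1) * (2*n+k-(n-1)) + (k - 3) := by
  obtain ⟨m, rfl⟩ : ∃ m, n = m + 1 := ⟨n - 1, by omega⟩
  have hsl : (stairList (m+1) k).length = m := by simp [stair_length]
  rw [rhoList, List.take_add (i := m) (j := 1),
    List.take_left' hsl, List.drop_left' hsl]
  simp only [List.take_succ_cons, List.take_zero, List.sum_append, List.sum_cons, List.sum_nil,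
    Nat.add_sub_cancel]
  have := stair_take_sum (m+1) k m hn (by omega)
  rw [List.take_of_length_le (le_of_eq hsl)] at this
  omega

lemma eq_of_take_sums : ∀ (L₁ L₂ : List ℕ), L₁.length = L₂.length →
    (∀ j, (L₁.take j).sum = (L₂.take j).sum) → L₁ = L₂ := by
  intro L₁
  induction L₁ with
  | nil =>
    intro L₂ hlen _
    exact (List.length_eq_zero_iff.mp hlen.symm).symm
  | cons a t ih =>
    intro L₂ hlen hsum
    match L₂ with
    | [] => simp at hlen
    | b :: u =>
      have h1 := hsum 1
      simp only [List.take_succ_cons, List.take_zero, List.sum_cons, List.sum_nil] at h1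
      have hab : a = b := by omega
      subst hab
      have : t = u := by
        refine ih u (by simpa using hlen) (fun j => ?_)
        have := hsum (j+1)
        simp only [List.take_succ_cons, List.sum_cons] at this
        omega
      rw [this]

end Helpers

/-- If `T` is a special rim hook tabloid of shape
`ρ = (2n+k-1, ..., k+3, k-3, 2, 2)` whose content `λ` is the type of some
chain partition of the product of chains `(n+k) × n`, then the first `n-1`
parts of `λ` agree with those of `ρ`. -/
theorem stmt_15 (n k : ℕ) (hn : 1 ≤ n) (hk : 5 ≤ k)
    (T : List (ℕ × ℕ)) (hT : T ∈ srhts (rhoList n k))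
    (h : HasChainPartitionOfType (Fin (n + k) × Fin n)
      ((T.map Prod.fst : List ℕ) : Multiset ℕ)) :
    (contList T).take (n - 1) = stairList n k := by
  classical
  obtain ⟨B, hpart, hchain, hμ⟩ := h
  have hccoe : ((contList T : List ℕ) : Multiset ℕ) = ((T.map Prod.fst : List ℕ) : Multiset ℕ) := by
    rw [contList]
    have h1 : ((((T.map Prod.fst : List ℕ) : Multiset ℕ).sort (· ≤ ·)).reverse : Multiset ℕ)
        = ((((T.map Prod.fst : List ℕ) : Multiset ℕ).sort (· ≤ ·) : List ℕ) : Multiset ℕ) :=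
      Multiset.coe_eq_coe.mpr (List.reverse_perm _)
    rw [h1, Multiset.sort_eq]
  have hcsorted : (contList T).Pairwise (· ≥ ·) := by
    rw [contList, List.pairwise_reverse]
    exact List.Pairwise.imp (fun h => h) (Multiset.pairwise_sort _ (· ≤ ·))
  have hupper : ∀ j, 2*j ≤ 2*n+k → ((contList T).take j).sum ≤ j * (2*n+k-j) := by
    intro j hj
    have hsub : (((contList T).take j : List ℕ) : Multiset ℕ) ≤ ((contList T : List ℕ) : Multiset ℕ) :=
      Multiset.coe_le.mpr (List.take_sublist _ _).subperm
    rw [hccoe, ← hμ] at hsub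
    obtain ⟨B', hB', hBmap⟩ := exists_le_map Finset.card B _ hsub
    have hcardB' : Multiset.card B' ≤ j := by
      have hc := congrArg Multiset.card hBmap
      rw [Multiset.card_map, Multiset.coe_card, List.length_take] at hc
      omega
    have hcb := chain_bound B B' hpart hchain hB' j hcardB' hj
    rw [hBmap] at hcb
    simpa using hcb
  have hlower : ∀ j, ((rhoList n k).take j).sum ≤ ((contList T).take j).sum := by
    intro j
    rw [srhts] at hT
    obtain ⟨s, hs1, hs2, hs3⟩ := srht_lower (rhoList n k).length (rhoList n k)
      (rho_sorted n k hk) (le_refl _) T hT j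
    refine le_trans hs3 (msum_le_take_sum _ hcsorted j s ?_ hs2)
    rw [hccoe]
    exact hs1
  have hc_eq : ∀ j, j ≤ n-1 → ((contList T).take j).sum = j * (2*n+k-j) := by
    intro j hj
    refine le_antisymm (hupper j (by omega)) ?_
    rw [← rho_take_sum n k j hn hj]
    exact hlower j
  have hnolen : ¬ ((contList T).length < n - 1) := by
    intro hcon
    have h1 : (contList T).take n = contList T := List.take_of_length_le (by omega)
    have h2 : (contList T).take (n-1) = contList T := List.take_of_length_le (by omega)
    have h3 := hlower n
    rw [rho_take_n_sum n k hn, h1] at h3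
    have h4 := hc_eq (n-1) (le_refl _)
    rw [h2] at h4
    rw [h4] at h3
    have hx : ∀ x : ℕ, ¬ (x + (k-3) ≤ x) := fun x hx => by omega
    exact hx _ h3
  have hL1len : ((contList T).take (n-1)).length = n - 1 := by
    rw [List.length_take]
    omega
  refine eq_of_take_sums _ _ (by rw [hL1len, stair_length]) (fun j => ?_)
  by_cases hj : j ≤ n - 1
  · rw [List.take_take, min_eq_left hj, hc_eq j hj, ← stair_take_sum n k j hn hj]
  · push_neg at hj
    rw [List.take_of_length_le (le_of_eq hL1len |>.trans (by omega)),
      List.take_of_length_le (le_of_eq (stair_length n k) |>.trans (by omega))]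
    have e1 := hc_eq (n-1) (le_refl _)
    have e2 := stair_take_sum n k (n-1) hn (le_refl _)
    rw [List.take_of_length_le (le_of_eq (stair_length n k))] at e2
    rw [e1, e2]
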